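/- For every nonempty interval I ⊆ ℝ there exist a locally finite family ([a_α, b_α])_{α ∈ A} of compact intervals of ℝ and a monomorphism k_I → ⊕_{α ∈ A} k_{[a_α,b_α]} in the category of sheaves of k-vector spaces on ℝ. -/

import Mathlib

open CategoryTheory TopologicalSpace Set Topology

noncomputable section

variable (k : Type) [Field k]

/-- The support of the function `s : V ∩ I → k` is closed in `V`. -/
def SuppClosedIn (I V : Set ℝ) (s : ↥(V ∩ I) → k) : Prop :=
  ∀ x ∈ V, x ∈ closure {y : ℝ | ∃ h : y ∈ V ∩ I, s ⟨y, h⟩ ≠ 0} →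
    ∃ h : x ∈ V ∩ I, s ⟨x, h⟩ ≠ 0

lemma zero_locConst (I V : Set ℝ) :
    IsLocallyConstant (0 : ↥(V ∩ I) → k) ∧ SuppClosedIn k I V 0 := by
  constructor
  · exact IsLocallyConstant.const 0
  · intro x _ hx
    exfalso
    have h0 : {y : ℝ | ∃ h : y ∈ V ∩ I, (0 : ↥(V ∩ I) → k) ⟨y, h⟩ ≠ 0} = ∅ := by
      ext y; simp
    rw [h0, closure_empty] at hx
    exact hx

/-- The sections over `V` of the sheaf `k_I`: locally constant functions on `V ∩ I`
whose support is closed in `V`. -/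
def secSub (I V : Set ℝ) : Submodule k (↥(V ∩ I) → k) where
  carrier := {s | IsLocallyConstant s ∧ SuppClosedIn k I V s}
  zero_mem' := zero_locConst k I V
  add_mem' := by
    rintro s t ⟨hslc, hscl⟩ ⟨htlc, htcl⟩
    have hlc : IsLocallyConstant (s + t) := hslc.comp₂ htlc (· + ·)
    refine ⟨hlc, ?_⟩
    intro x hxV hxcl
    have hsub : {y : ℝ | ∃ h : y ∈ V ∩ I, (s + t) ⟨y, h⟩ ≠ 0}
        ⊆ {y : ℝ | ∃ h : y ∈ V ∩ I, s ⟨y, h⟩ ≠ 0}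
          ∪ {y : ℝ | ∃ h : y ∈ V ∩ I, t ⟨y, h⟩ ≠ 0} := by
      rintro y ⟨h, hy⟩
      by_cases hsy : s ⟨y, h⟩ = 0
      · refine Or.inr ⟨h, fun h0 => hy ?_⟩
        show s ⟨y, h⟩ + t ⟨y, h⟩ = 0
        rw [hsy, h0, add_zero]
      · exact Or.inl ⟨h, hsy⟩
    have hxVI : x ∈ V ∩ I := by
      have hcl2 := closure_mono hsub hxcl
      rw [closure_union] at hcl2
      rcases hcl2 with h | h
      · exact (hscl x hxV h).choose
      · exact (htcl x hxV h).choose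
    refine ⟨hxVI, ?_⟩
    have hA : IsClosed {y : ↥(V ∩ I) | (s + t) y ≠ 0} := by
      have h1 : IsOpen ((s + t) ⁻¹' {0}) := hlc {0}
      have h2 := h1.isClosed_compl
      have h3 : ((s + t) ⁻¹' {0})ᶜ = {y : ↥(V ∩ I) | (s + t) y ≠ 0} := by
        ext y; simp
      exact h3 ▸ h2
    have hmem : (⟨x, hxVI⟩ : ↥(V ∩ I)) ∈ closure {y : ↥(V ∩ I) | (s + t) y ≠ 0} := by
      rw [closure_subtype]
      have himg : Subtype.val '' {y : ↥(V ∩ I) | (s + t) y ≠ 0}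
          = {y : ℝ | ∃ h : y ∈ V ∩ I, (s + t) ⟨y, h⟩ ≠ 0} := by
        ext y
        constructor
        · rintro ⟨z, hz, rfl⟩; exact ⟨z.2, hz⟩
        · rintro ⟨h, hy⟩; exact ⟨⟨y, h⟩, hy, rfl⟩
      rw [himg]
      exact hxcl
    have := hA.closure_eq ▸ hmem
    exact this
  smul_mem' := by
    intro c s hs
    rcases hs with ⟨hlc, hcl⟩
    by_cases hc : c = 0
    · subst hc
      rw [zero_smul]
      exact zero_locConst k I V
    · constructor
      · exact hlc.comp (fun a => c • a)
      · intro x hxV hxcl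
        have hset : {y : ℝ | ∃ h : y ∈ V ∩ I, (c • s) ⟨y, h⟩ ≠ 0}
            = {y : ℝ | ∃ h : y ∈ V ∩ I, s ⟨y, h⟩ ≠ 0} := by
          ext y
          constructor
          · rintro ⟨h, hy⟩
            refine ⟨h, fun h0 => hy ?_⟩
            show c • s ⟨y, h⟩ = 0
            rw [h0, smul_zero]
          · rintro ⟨h, hy⟩
            exact ⟨h, by simpa [smul_eq_zero, hc] using hy⟩
        rw [hset] at hxcl
        obtain ⟨h, hy⟩ := hcl x hxV hxcl
        exact ⟨h, by simpa [smul_eq_zero, hc] using hy⟩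
/-- Restriction of sections. -/
def resFun (I : Set ℝ) {V W : Set ℝ} (h : W ⊆ V) (s : ↥(V ∩ I) → k) : ↥(W ∩ I) → k :=
  fun y => s ⟨y.1, ⟨h y.2.1, y.2.2⟩⟩

lemma resFun_mem (I : Set ℝ) {V W : Set ℝ} (h : W ⊆ V) (s : ↥(V ∩ I) → k)
    (hs : s ∈ secSub k I V) : resFun k I h s ∈ secSub k I W := by
  obtain ⟨hlc, hcl⟩ := hs
  constructor
  · exact hlc.comp_continuous (Continuous.subtype_mk continuous_subtype_val _)
  · intro x hxW hxcl
    have hsub : {y : ℝ | ∃ h' : y ∈ W ∩ I, resFun k I h s ⟨y, h'⟩ ≠ 0}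
        ⊆ {y : ℝ | ∃ h' : y ∈ V ∩ I, s ⟨y, h'⟩ ≠ 0} := by
      rintro y ⟨h', hy⟩
      exact ⟨⟨h h'.1, h'.2⟩, hy⟩
    obtain ⟨hxVI, hne⟩ := hcl x (h hxW) (closure_mono hsub hxcl)
    exact ⟨⟨hxW, hxVI.2⟩, hne⟩

/-- Restriction as a linear map. -/
def resLM (I : Set ℝ) {V W : Set ℝ} (h : W ⊆ V) : secSub k I V →ₗ[k] secSub k I W where
  toFun s := ⟨resFun k I h s.1, resFun_mem k I h s.1 s.2⟩
  map_add' s t := rfl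
  map_smul' c s := rfl

/-- The presheaf `k_I` on `ℝ`. -/
def intervalPresheaf (I : Set ℝ) : TopCat.Presheaf (ModuleCat.{0} k) (TopCat.of ℝ) where
  obj V := ModuleCat.of k (secSub k I V.unop.1)
  map {V W} f := ModuleCat.ofHom (resLM k I (leOfHom f.unop))
  map_id V := rfl
  map_comp f g := rfl
theorem intervalPresheaf_isSheaf (I : Set ℝ) : (intervalPresheaf k I).IsSheaf := by
  classical
  rw [TopCat.Presheaf.isSheaf_iff_isSheafUniqueGluing]
  intro ι U sf hcomp
  change ∀ i, secSub k I (U i).1 at sf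
  -- pointwise compatibility
  have key : ∀ (i j : ι) (x : ℝ) (hxi : x ∈ (U i).1 ∩ I) (hxj : x ∈ (U j).1 ∩ I),
      (sf i).1 ⟨x, hxi⟩ = (sf j).1 ⟨x, hxj⟩ := by
    intro i j x hxi hxj
    have h := hcomp i j
    have hmem : x ∈ (U i ⊓ U j).1 ∩ I := ⟨⟨hxi.1, hxj.1⟩, hxi.2⟩
    have h2 := congrFun (congrArg Subtype.val h) ⟨x, hmem⟩
    exact h2
  have hmemS : ∀ x : ↥((iSup U : Opens (TopCat.of ℝ)).1 ∩ I), ∃ i, x.1 ∈ U i := by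
    intro x
    exact Opens.mem_iSup.mp x.2.1
  set idx : ↥((iSup U : Opens (TopCat.of ℝ)).1 ∩ I) → ι := fun x => (hmemS x).choose with hidxdef
  have hidx : ∀ x, x.1 ∈ U (idx x) := fun x => (hmemS x).choose_spec
  set s₀ : ↥((iSup U : Opens (TopCat.of ℝ)).1 ∩ I) → k :=
    fun x => (sf (idx x)).1 ⟨x.1, ⟨hidx x, x.2.2⟩⟩ with hs₀def
  have hs₀ : ∀ (x : ↥((iSup U : Opens (TopCat.of ℝ)).1 ∩ I)) (i : ι) (hx : x.1 ∈ U i),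
      s₀ x = (sf i).1 ⟨x.1, ⟨hx, x.2.2⟩⟩ :=
    fun x i hx => key (idx x) i x.1 ⟨hidx x, x.2.2⟩ ⟨hx, x.2.2⟩
  have hlc : IsLocallyConstant s₀ := by
    rw [IsLocallyConstant.iff_exists_open]
    intro x
    obtain ⟨i, hi⟩ := hmemS x
    have hlci : IsLocallyConstant ((sf i).1 : ↥((U i).1 ∩ I) → k) := (sf i).2.1
    obtain ⟨W, hWopen, hpW, hWconst⟩ := hlci.exists_open (⟨x.1, ⟨hi, x.2.2⟩⟩ : ↥((U i).1 ∩ I))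
    obtain ⟨O, hOopen, hWO⟩ := isOpen_induced_iff.mp hWopen
    subst hWO
    refine ⟨Subtype.val ⁻¹' (O ∩ (U i).1), (hOopen.inter (U i).2).preimage continuous_subtype_val,
      ⟨hpW, hi⟩, ?_⟩
    intro y hy
    have hyi : y.1 ∈ U i := hy.2
    rw [hs₀ y i hyi, hs₀ x i hi]
    exact hWconst ⟨y.1, ⟨hyi, y.2.2⟩⟩ hy.1
  have hscl : SuppClosedIn k I (iSup U : Opens (TopCat.of ℝ)).1 s₀ := by
    intro x hxS hxcl
    obtain ⟨i, hi⟩ := Opens.mem_iSup.mp hxS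
    have h1 : x ∈ closure ({y : ℝ | ∃ h : y ∈ (iSup U : Opens (TopCat.of ℝ)).1 ∩ I, s₀ ⟨y, h⟩ ≠ 0}
        ∩ (U i).1) := by
      rw [mem_closure_iff] at hxcl ⊢
      intro O hO hxO
      obtain ⟨z, hz⟩ := hxcl (O ∩ (U i).1) (hO.inter (U i).2) ⟨hxO, hi⟩
      exact ⟨z, hz.1.1, hz.2, hz.1.2⟩
    have hsub : {y : ℝ | ∃ h : y ∈ (iSup U : Opens (TopCat.of ℝ)).1 ∩ I, s₀ ⟨y, h⟩ ≠ 0}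
        ∩ (U i).1 ⊆ {y : ℝ | ∃ h : y ∈ (U i).1 ∩ I, (sf i).1 ⟨y, h⟩ ≠ 0} := by
      rintro y ⟨⟨hy, hne⟩, hyi⟩
      refine ⟨⟨hyi, hy.2⟩, ?_⟩
      rw [← hs₀ ⟨y, hy⟩ i hyi]
      exact hne
    obtain ⟨hyUI, hne⟩ := (sf i).2.2 x hi (closure_mono hsub h1)
    refine ⟨⟨hxS, hyUI.2⟩, ?_⟩
    rw [hs₀ ⟨x, ⟨hxS, hyUI.2⟩⟩ i hyUI.1]
    exact hne
  refine ⟨⟨s₀, hlc, hscl⟩, ?_, ?_⟩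
  · intro i
    apply Subtype.ext
    funext y
    exact hs₀ ⟨y.1, ⟨leOfHom (Opens.leSupr U i) y.2.1, y.2.2⟩⟩ i y.2.1
  · intro t ht
    apply Subtype.ext
    funext x
    have h := ht (idx x)
    have h2 := congrFun (congrArg Subtype.val h) ⟨x.1, ⟨hidx x, x.2.2⟩⟩
    exact h2

/-- The sheaf `k_I` on `ℝ` for an interval `I`: locally constant functions on `V ∩ I`
whose support is closed in `V`. -/
def intervalSheaf (I : Set ℝ) :
    Sheaf (Opens.grothendieckTopology (TopCat.of ℝ)) (ModuleCat.{0} k) :=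
  ⟨intervalPresheaf k I, intervalPresheaf_isSheaf k I⟩
/-- The category of sheaves of `k`-vector spaces on `ℝ`. -/
abbrev RealSheafCat := Sheaf (Opens.grothendieckTopology (TopCat.of ℝ)) (ModuleCat.{0} k)

instance sheafHomSMul (F G : RealSheafCat k) : SMul k (F ⟶ G) :=
  ⟨fun c f => ⟨c • f.hom⟩⟩

instance sheafHomModule (F G : RealSheafCat k) : Module k (F ⟶ G) :=
  Function.Injective.module k
    { toFun := fun f : F ⟶ G => f.hom
      map_zero' := rfl
      map_add' := fun _ _ => rfl }
    (fun _ _ h => InducedCategory.Hom.ext h) (fun _ _ => rfl)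

instance : HasExt.{1} (RealSheafCat k) := by
  letI := HasDerivedCategory.standard (RealSheafCat k)
  exact hasExt_of_hasDerivedCategory _

/-- The interval `(a, b)` with possibly infinite endpoints. -/
def Ioo' (a b : EReal) : Set ℝ := {x : ℝ | a < (x : EReal) ∧ (x : EReal) < b}

/-- The interval `[a, b)` with a possibly infinite right endpoint. -/
def Ico' (a : ℝ) (b : EReal) : Set ℝ := {x : ℝ | a ≤ x ∧ (x : EReal) < b}

/-- The interval `(a, b]` with a possibly infinite left endpoint. -/
def Ioc' (a : EReal) (b : ℝ) : Set ℝ := {x : ℝ | a < (x : EReal) ∧ x ≤ b}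

/-- Identification of sheaves on the topological space `ℝ` with objects of `RealSheafCat`. -/
def toRS (F : TopCat.Sheaf (ModuleCat.{0} k) (TopCat.of ℝ)) : RealSheafCat k := F

/-- Sheafification exists for sheaves of `k`-vector spaces on `ℝ` (no longer found by instance
search automatically). -/
instance realSheafHasSheafify :
    HasSheafify (Opens.grothendieckTopology (TopCat.of ℝ)) (ModuleCat.{0} k) :=
  HasSheafify.mk' _ _ (plusPlusAdjunction _ _)

instance realSheafHasColimits : Limits.HasColimitsOfSize.{0, 0} (RealSheafCat k) :=
  ⟨fun _ _ => ⟨fun _ => Limits.HasColimit.mk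
    ⟨Sheaf.sheafifyCocone (Limits.colimit.cocone _),
      Sheaf.isColimitSheafifyCocone _ (Limits.colimit.isColimit _)⟩⟩⟩



/-! ### Auxiliary development for Statement 10 -/

section RhoAux

open scoped Classical in
/-- The "restrict to `J`, extend by zero" map on functions. -/
def rhoFun (I J : Set ℝ) {V : Set ℝ} (s : ↥(V ∩ I) → k) : ↥(V ∩ J) → k :=
  fun y => if h : y.1 ∈ I then s ⟨y.1, ⟨y.2.1, h⟩⟩ else 0

lemma rhoFun_mem (I J : Set ℝ) (hJ : IsClosed J)
    (hsep : ∀ x ∈ I, x ∉ closure (J \ I)) (V : Set ℝ)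
    (s : ↥(V ∩ I) → k) (hs : s ∈ secSub k I V) :
    rhoFun k I J s ∈ secSub k J V := by
  obtain ⟨hlc, hcl⟩ := hs
  constructor
  · rw [IsLocallyConstant.iff_exists_open]
    rintro ⟨y, hyV, hyJ⟩
    by_cases hyI : y ∈ I
    · obtain ⟨W, hWopen, hyW, hWconst⟩ := hlc.exists_open (⟨y, hyV, hyI⟩ : ↥(V ∩ I))
      obtain ⟨O, hOopen, rfl⟩ := isOpen_induced_iff.mp hWopen
      by_cases hc : s ⟨y, hyV, hyI⟩ = 0
      · refine ⟨Subtype.val ⁻¹' O, hOopen.preimage continuous_subtype_val, hyW, ?_⟩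
        rintro ⟨z, hzV, hzJ⟩ hzO
        show rhoFun k I J s ⟨z, hzV, hzJ⟩ = rhoFun k I J s ⟨y, hyV, hyJ⟩
        unfold rhoFun
        rw [dif_pos hyI, hc]
        by_cases hzI : z ∈ I
        · rw [dif_pos hzI]
          have := hWconst ⟨z, hzV, hzI⟩ hzO
          rw [this, hc]
        · rw [dif_neg hzI]
      · refine ⟨Subtype.val ⁻¹' (O ∩ (closure (J \ I))ᶜ),
          (hOopen.inter (isClosed_closure.isOpen_compl)).preimage continuous_subtype_val,
          ⟨hyW, hsep y hyI⟩, ?_⟩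
        rintro ⟨z, hzV, hzJ⟩ ⟨hzO, hzC⟩
        have hzI : z ∈ I := by
          by_contra hzI
          exact hzC (subset_closure ⟨hzJ, hzI⟩)
        show rhoFun k I J s ⟨z, hzV, hzJ⟩ = rhoFun k I J s ⟨y, hyV, hyJ⟩
        unfold rhoFun
        rw [dif_pos hyI, dif_pos hzI]
        exact hWconst ⟨z, hzV, hzI⟩ hzO
    · refine ⟨Subtype.val ⁻¹' (closure {w : ℝ | ∃ h : w ∈ V ∩ I, s ⟨w, h⟩ ≠ 0})ᶜ,
        isClosed_closure.isOpen_compl.preimage continuous_subtype_val, ?_, ?_⟩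
      · intro hy
        exact hyI (hcl y hyV hy).choose.2
      · rintro ⟨z, hzV, hzJ⟩ hz
        show rhoFun k I J s ⟨z, hzV, hzJ⟩ = rhoFun k I J s ⟨y, hyV, hyJ⟩
        unfold rhoFun
        rw [dif_neg hyI]
        by_cases hzI : z ∈ I
        · rw [dif_pos hzI]
          by_contra hne
          exact hz (subset_closure ⟨⟨hzV, hzI⟩, hne⟩)
        · rw [dif_neg hzI]
  · intro x hxV hxcl
    have hsub : {w : ℝ | ∃ h : w ∈ V ∩ J, rhoFun k I J s ⟨w, h⟩ ≠ 0}
        ⊆ {w : ℝ | ∃ h : w ∈ V ∩ I, s ⟨w, h⟩ ≠ 0} ∩ J := by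
      rintro w ⟨hwVJ, hwne⟩
      by_cases hwI : w ∈ I
      · refine ⟨⟨⟨hwVJ.1, hwI⟩, ?_⟩, hwVJ.2⟩
        intro h0
        apply hwne
        unfold rhoFun
        rw [dif_pos hwI]
        exact h0
      · exact absurd (dif_neg hwI) hwne
    have hx1 : x ∈ closure {w : ℝ | ∃ h : w ∈ V ∩ I, s ⟨w, h⟩ ≠ 0} :=
      closure_mono (hsub.trans Set.inter_subset_left) hxcl
    have hx2 : x ∈ J := by
      have := closure_mono (hsub.trans Set.inter_subset_right) hxcl
      rwa [hJ.closure_eq] at this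
    obtain ⟨hxVI, hxne⟩ := hcl x hxV hx1
    refine ⟨⟨hxV, hx2⟩, ?_⟩
    unfold rhoFun
    rw [dif_pos hxVI.2]
    exact hxne

/-- The "restrict and extend by zero" linear map on sections. -/
def rhoLM (I J : Set ℝ) (hJ : IsClosed J)
    (hsep : ∀ x ∈ I, x ∉ closure (J \ I)) (V : Set ℝ) :
    secSub k I V →ₗ[k] secSub k J V where
  toFun s := ⟨rhoFun k I J s.1, rhoFun_mem k I J hJ hsep V s.1 s.2⟩
  map_add' s t := by
    apply Subtype.ext
    funext y
    show rhoFun k I J (s.1 + t.1) y = rhoFun k I J s.1 y + rhoFun k I J t.1 y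
    unfold rhoFun
    by_cases h : y.1 ∈ I
    · rw [dif_pos h, dif_pos h, dif_pos h]; rfl
    · rw [dif_neg h, dif_neg h, dif_neg h, add_zero]
  map_smul' c s := by
    apply Subtype.ext
    funext y
    show rhoFun k I J (c • s.1) y = c • rhoFun k I J s.1 y
    unfold rhoFun
    by_cases h : y.1 ∈ I
    · rw [dif_pos h, dif_pos h]; rfl
    · rw [dif_neg h, dif_neg h, smul_zero]

/-- The "restrict and extend by zero" morphism of sheaves `k_I ⟶ k_J`. -/
def rhoHom (I J : Set ℝ) (hJ : IsClosed J)
    (hsep : ∀ x ∈ I, x ∉ closure (J \ I)) :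
    intervalSheaf k I ⟶ intervalSheaf k J :=
  ⟨{ app := fun V => ModuleCat.ofHom (rhoLM k I J hJ hsep V.unop.1)
     naturality := fun V W f => rfl }⟩

end RhoAux

section CoprodAux

open CategoryTheory.Limits Opposite

variable (I : Set ℝ) {A : Type} (a b : A → ℝ)

/-- The coproduct sheaf `⊕ k_{[aα,bα]}`. -/
noncomputable def GG : RealSheafCat k := ∐ fun α : A => intervalSheaf k (Set.Icc (a α) (b α))

/-- The coproduct sheaf, seen as a sheaf on the space `ℝ`. -/
noncomputable def GS : TopCat.Sheaf (ModuleCat.{0} k) (TopCat.of ℝ) := GG k a b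

lemma hom_congr {X Y : ModuleCat.{0} k} {f g : X ⟶ Y} (h : f = g) (x : X) : f x = g x := by
  rw [h]

variable (hsep : ∀ α, ∀ x ∈ I, x ∉ closure (Set.Icc (a α) (b α) \ I))
variable (hlf : ∀ K : Set ℝ, IsCompact K → {α | (Set.Icc (a α) (b α) ∩ K).Nonempty}.Finite)

/-- One summand of the comparison map on sections. -/
noncomputable def termAt (V : Opens (TopCat.of ℝ)) (α : A)
    (s : (intervalSheaf k I).val.obj (op V)) : (GG k a b).val.obj (op V) :=
  (Sigma.ι (fun α : A => intervalSheaf k (Set.Icc (a α) (b α))) α).hom.app (op V)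
    ((rhoHom k I (Set.Icc (a α) (b α)) isClosed_Icc (hsep α)).hom.app (op V) s)

lemma res_res (P : TopCat.Presheaf (ModuleCat.{0} k) (TopCat.of ℝ))
    {U V W : Opens (TopCat.of ℝ)} (h1 : U ≤ V) (h2 : V ≤ W) (t : P.obj (op W)) :
    P.map (homOfLE h1).op (P.map (homOfLE h2).op t) = P.map (homOfLE (h1.trans h2)).op t := by
  have e : (homOfLE (h1.trans h2)).op = (homOfLE h2).op ≫ (homOfLE h1).op := rfl
  rw [e, P.map_comp]
  rfl

lemma termAt_res {V W : Opens (TopCat.of ℝ)} (h : W ≤ V) (α : A)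
    (s : (intervalSheaf k I).val.obj (op V)) :
    (GG k a b).val.map (homOfLE h).op (termAt k I a b hsep V α s)
      = termAt k I a b hsep W α ((intervalSheaf k I).val.map (homOfLE h).op s) := by
  unfold termAt
  have e1 := hom_congr k
    ((Sigma.ι (fun α : A => intervalSheaf k (Set.Icc (a α) (b α))) α).hom.naturality
      (homOfLE h).op)
    ((rhoHom k I (Set.Icc (a α) (b α)) isClosed_Icc (hsep α)).hom.app (op V) s)
  have e2 := hom_congr k
    ((rhoHom k I (Set.Icc (a α) (b α)) isClosed_Icc (hsep α)).hom.naturality (homOfLE h).op) s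
  exact e1.symm.trans
    (congrArg ((Sigma.ι (fun α : A => intervalSheaf k (Set.Icc (a α) (b α))) α).hom.app (op W))
      e2)

lemma secSub_eq_zero {J V : Set ℝ} (h : ∀ x, x ∈ V → x ∈ J → False) (u : secSub k J V) :
    u = 0 :=
  Subtype.ext (funext fun y => (h y.1 y.2.1 y.2.2).elim)

lemma termAt_eq_zero (V : Opens (TopCat.of ℝ)) (α : A)
    (s : (intervalSheaf k I).val.obj (op V)) (h : ∀ x, x ∈ V.1 → x ∉ Set.Icc (a α) (b α)) :
    termAt k I a b hsep V α s = 0 := by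
  unfold termAt
  rw [secSub_eq_zero k (fun x hx hx' => h x hx hx')
    ((rhoHom k I (Set.Icc (a α) (b α)) isClosed_Icc (hsep α)).hom.app (op V) s)]
  exact map_zero _

/-- Sum of the summands over a finite set of indices. -/
noncomputable def bigSum (V : Opens (TopCat.of ℝ)) (T : Finset A)
    (s : (intervalSheaf k I).val.obj (op V)) : (GG k a b).val.obj (op V) :=
  ∑ α ∈ T, termAt k I a b hsep V α s

lemma bigSum_res {V W : Opens (TopCat.of ℝ)} (h : W ≤ V) (T : Finset A)
    (s : (intervalSheaf k I).val.obj (op V)) :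
    (GG k a b).val.map (homOfLE h).op (bigSum k I a b hsep V T s)
      = bigSum k I a b hsep W T ((intervalSheaf k I).val.map (homOfLE h).op s) := by
  unfold bigSum
  rw [map_sum]
  exact Finset.sum_congr rfl fun α _ => termAt_res k I a b hsep h α s

lemma bigSum_subset (V : Opens (TopCat.of ℝ)) {T T' : Finset A} (hsub : T ⊆ T')
    (s : (intervalSheaf k I).val.obj (op V))
    (h : ∀ α ∈ T', α ∉ T → ∀ x ∈ V.1, x ∉ Set.Icc (a α) (b α)) :
    bigSum k I a b hsep V T' s = bigSum k I a b hsep V T s :=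
  (Finset.sum_subset hsub fun α hα hα' =>
    termAt_eq_zero k I a b hsep V α s (h α hα hα')).symm

open scoped Classical in
lemma bigSum_congr (V : Opens (TopCat.of ℝ)) (T T' : Finset A)
    (s : (intervalSheaf k I).val.obj (op V))
    (hT : ∀ α, (Set.Icc (a α) (b α) ∩ V.1).Nonempty → α ∈ T)
    (hT' : ∀ α, (Set.Icc (a α) (b α) ∩ V.1).Nonempty → α ∈ T') :
    bigSum k I a b hsep V T s = bigSum k I a b hsep V T' s := by
  have h1 : bigSum k I a b hsep V (T ∪ T') s = bigSum k I a b hsep V T s := by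
    refine bigSum_subset k I a b hsep V Finset.subset_union_left s ?_
    intro α _ hα x hxV hxI
    exact hα (hT α ⟨x, hxI, hxV⟩)
  have h2 : bigSum k I a b hsep V (T ∪ T') s = bigSum k I a b hsep V T' s := by
    refine bigSum_subset k I a b hsep V Finset.subset_union_right s ?_
    intro α _ hα x hxV hxI
    exact hα (hT' α ⟨x, hxI, hxV⟩)
  rw [← h1, h2]

/-- The finite set of indices relevant near `x`. -/
noncomputable def SxF (x : ℝ) : Finset A :=
  (hlf (Set.Icc (x-1) (x+1)) isCompact_Icc).toFinset

lemma mem_SxF {x : ℝ} {α : A}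
    (h : (Set.Icc (a α) (b α) ∩ Set.Icc (x-1) (x+1)).Nonempty) : α ∈ SxF a b hlf x :=
  (Set.Finite.mem_toFinset _).mpr h

/-- The index type of the canonical cover of `V`. -/
abbrev coverI (V : Opens (TopCat.of ℝ)) : Type := {x : ℝ // x ∈ V.1}

/-- The canonical cover of `V` by unit balls. -/
def coverU (V : Opens (TopCat.of ℝ)) (x : coverI V) : Opens (TopCat.of ℝ) :=
  V ⊓ ⟨(Set.Ioo (x.1-1) (x.1+1) : Set ℝ), by exact (isOpen_Ioo : IsOpen (Set.Ioo (x.1-1) (x.1+1) : Set ℝ))⟩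

lemma coverU_le (V : Opens (TopCat.of ℝ)) (x : coverI V) : coverU V x ≤ V := inf_le_left

lemma coverU_subset_Ioo (V : Opens (TopCat.of ℝ)) (x : coverI V) :
    (coverU V x).1 ⊆ (Set.Ioo (x.1-1) (x.1+1) : Set ℝ) := fun _ h => h.2

lemma le_iSup_coverU (V : Opens (TopCat.of ℝ)) : V ≤ iSup (coverU V) := by
  have key : ∀ q : ℝ, q ∈ V.1 → q ∈ (iSup (coverU V)).1 := by
    intro q hq
    exact Opens.mem_iSup.mpr ⟨⟨q, hq⟩, ⟨hq, ⟨sub_one_lt q, lt_add_one q⟩⟩⟩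
  intro p hp
  exact key p hp


/-- The local candidate sections for the glued map. -/
noncomputable def sfam (V : Opens (TopCat.of ℝ)) (s : (intervalSheaf k I).val.obj (op V))
    (x : coverI V) : (GG k a b).val.obj (op (coverU V x)) :=
  bigSum k I a b hsep (coverU V x) (SxF a b hlf x.1)
    ((intervalSheaf k I).val.map (homOfLE (coverU_le V x)).op s)

lemma sfam_compatible (V : Opens (TopCat.of ℝ)) (s : (intervalSheaf k I).val.obj (op V)) :
    TopCat.Presheaf.IsCompatible (GS k a b).1 (coverU V) (sfam k I a b hsep hlf V s) := by
  intro x y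
  show (GG k a b).val.map
      (homOfLE (inf_le_left : coverU V x ⊓ coverU V y ≤ coverU V x)).op
      (sfam k I a b hsep hlf V s x)
    = (GG k a b).val.map
      (homOfLE (inf_le_right : coverU V x ⊓ coverU V y ≤ coverU V y)).op
      (sfam k I a b hsep hlf V s y)
  unfold sfam
  rw [bigSum_res, bigSum_res, res_res, res_res]
  apply bigSum_congr
  · intro α hα
    obtain ⟨w, hwI, hwW⟩ := hα
    apply mem_SxF
    have := coverU_subset_Ioo V x hwW.1
    exact ⟨w, hwI, ⟨le_of_lt this.1, le_of_lt this.2⟩⟩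
  · intro α hα
    obtain ⟨w, hwI, hwW⟩ := hα
    apply mem_SxF
    have := coverU_subset_Ioo V y hwW.2
    exact ⟨w, hwI, ⟨le_of_lt this.1, le_of_lt this.2⟩⟩

/-- The glued comparison section. -/
noncomputable def glueSec (V : Opens (TopCat.of ℝ))
    (s : (intervalSheaf k I).val.obj (op V)) : (GG k a b).val.obj (op V) :=
  ((GS k a b).existsUnique_gluing' (coverU V) V (fun x => homOfLE (coverU_le V x))
    (le_iSup_coverU V) (sfam k I a b hsep hlf V s)
    (sfam_compatible k I a b hsep hlf V s)).exists.choose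

lemma glueSec_spec (V : Opens (TopCat.of ℝ)) (s : (intervalSheaf k I).val.obj (op V))
    (x : coverI V) :
    (GG k a b).val.map (homOfLE (coverU_le V x)).op (glueSec k I a b hsep hlf V s)
      = sfam k I a b hsep hlf V s x :=
  ((GS k a b).existsUnique_gluing' (coverU V) V (fun x => homOfLE (coverU_le V x))
    (le_iSup_coverU V) (sfam k I a b hsep hlf V s)
    (sfam_compatible k I a b hsep hlf V s)).exists.choose_spec x

lemma glueSec_res (V : Opens (TopCat.of ℝ)) (s : (intervalSheaf k I).val.obj (op V))
    {W : Opens (TopCat.of ℝ)} (hWV : W ≤ V) {x : ℝ} (hxV : x ∈ V.1)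
    (hWx : (W : Opens (TopCat.of ℝ)).1 ⊆ (Set.Ioo (x-1) (x+1) : Set ℝ)) :
    (GG k a b).val.map (homOfLE hWV).op (glueSec k I a b hsep hlf V s)
      = bigSum k I a b hsep W (SxF a b hlf x)
          ((intervalSheaf k I).val.map (homOfLE hWV).op s) := by
  have h2 : W ≤ coverU V ⟨x, hxV⟩ := fun w hw => ⟨hWV hw, hWx hw⟩
  have e := congrArg ((GG k a b).val.map (homOfLE h2).op)
    (glueSec_spec k I a b hsep hlf V s ⟨x, hxV⟩)
  rw [res_res] at e
  unfold sfam at e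
  rw [bigSum_res, res_res] at e
  exact e

lemma termAt_add (V : Opens (TopCat.of ℝ)) (α : A)
    (s t : (intervalSheaf k I).val.obj (op V)) :
    termAt k I a b hsep V α (s + t)
      = termAt k I a b hsep V α s + termAt k I a b hsep V α t := by
  unfold termAt
  rw [map_add, map_add]
  rfl

lemma termAt_smul (V : Opens (TopCat.of ℝ)) (α : A) (c : k)
    (s : (intervalSheaf k I).val.obj (op V)) :
    termAt k I a b hsep V α (c • s) = c • termAt k I a b hsep V α s := by
  unfold termAt
  rw [map_smul, map_smul]
  rfl

/-- The comparison map on sections. -/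
noncomputable def phiLM (V : Opens (TopCat.of ℝ)) :
    (intervalSheaf k I).val.obj (op V) →ₗ[k] (GG k a b).val.obj (op V) where
  toFun s := glueSec k I a b hsep hlf V s
  map_add' s t := by
    apply TopCat.Sheaf.eq_of_locally_eq' (GS k a b) (coverU V) V
      (fun x => homOfLE (coverU_le V x)) (le_iSup_coverU V)
    intro x
    show (GG k a b).val.map (homOfLE (coverU_le V x)).op (glueSec k I a b hsep hlf V (s + t))
      = (GG k a b).val.map (homOfLE (coverU_le V x)).op
          (glueSec k I a b hsep hlf V s + glueSec k I a b hsep hlf V t)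
    rw [map_add, glueSec_spec, glueSec_spec, glueSec_spec]
    unfold sfam bigSum
    rw [map_add, ← Finset.sum_add_distrib]
    exact Finset.sum_congr rfl fun α _ => termAt_add k I a b hsep _ α _ _
  map_smul' c s := by
    apply TopCat.Sheaf.eq_of_locally_eq' (GS k a b) (coverU V) V
      (fun x => homOfLE (coverU_le V x)) (le_iSup_coverU V)
    intro x
    show (GG k a b).val.map (homOfLE (coverU_le V x)).op (glueSec k I a b hsep hlf V (c • s))
      = (GG k a b).val.map (homOfLE (coverU_le V x)).op (c • glueSec k I a b hsep hlf V s)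
    rw [map_smul, glueSec_spec, glueSec_spec]
    unfold sfam bigSum
    rw [map_smul, Finset.smul_sum]
    exact Finset.sum_congr rfl fun α _ => termAt_smul k I a b hsep _ α c _

lemma glueSec_natural (V : Opens (TopCat.of ℝ)) {W : Opens (TopCat.of ℝ)} (hWV : W ≤ V)
    (s : (intervalSheaf k I).val.obj (op V)) :
    glueSec k I a b hsep hlf W ((intervalSheaf k I).val.map (homOfLE hWV).op s)
      = (GG k a b).val.map (homOfLE hWV).op (glueSec k I a b hsep hlf V s) := by
  apply TopCat.Sheaf.eq_of_locally_eq' (GS k a b) (coverU W) W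
    (fun x => homOfLE (coverU_le W x)) (le_iSup_coverU W)
  intro y
  show (GG k a b).val.map (homOfLE (coverU_le W y)).op
      (glueSec k I a b hsep hlf W ((intervalSheaf k I).val.map (homOfLE hWV).op s))
    = (GG k a b).val.map (homOfLE (coverU_le W y)).op
      ((GG k a b).val.map (homOfLE hWV).op (glueSec k I a b hsep hlf V s))
  rw [glueSec_spec]
  unfold sfam
  rw [res_res, res_res,
    glueSec_res k I a b hsep hlf V s ((coverU_le W y).trans hWV) (hWV y.2)
      (coverU_subset_Ioo W y)]

/-- The comparison morphism of sheaves `k_I ⟶ ⊕ k_{[aα,bα]}`. -/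
noncomputable def phiHom : intervalSheaf k I ⟶ GG k a b where
  hom :=
    { app := fun V => ModuleCat.ofHom (phiLM k I a b hsep hlf V.unop)
      naturality := by
        intro Vop Wop f
        apply ModuleCat.hom_ext
        apply LinearMap.ext
        intro s
        show glueSec k I a b hsep hlf Wop.unop
            ((intervalSheaf k I).val.map (homOfLE (leOfHom f.unop)).op s)
          = (GG k a b).val.map (homOfLE (leOfHom f.unop)).op
            (glueSec k I a b hsep hlf Vop.unop s)
        exact glueSec_natural k I a b hsep hlf Vop.unop (leOfHom f.unop) s }

open scoped Classical in
/-- The projection of the coproduct onto one of its factors. -/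
noncomputable def projHom (α₀ : A) :
    GG k a b ⟶ intervalSheaf k (Set.Icc (a α₀) (b α₀)) :=
  Sigma.desc fun β => if h : β = α₀ then eqToHom (by rw [h]) else 0

open scoped Classical in
lemma proj_termAt (V : Opens (TopCat.of ℝ)) (α₀ β : A)
    (s : (intervalSheaf k I).val.obj (op V)) :
    (projHom k a b α₀).hom.app (op V) (termAt k I a b hsep V β s)
      = if β = α₀
        then (rhoHom k I (Set.Icc (a α₀) (b α₀)) isClosed_Icc (hsep α₀)).hom.app (op V) s
        else 0 := by
  by_cases h : β = α₀
  · subst h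
    rw [if_pos rfl]
    have e : Sigma.ι (fun α : A => intervalSheaf k (Set.Icc (a α) (b α))) β
        ≫ projHom k a b β = 𝟙 _ := by
      unfold projHom
      rw [Sigma.ι_desc]
      simp
    have e' := congrArg (fun (g : intervalSheaf k (Set.Icc (a β) (b β)) ⟶
        intervalSheaf k (Set.Icc (a β) (b β))) => g.hom.app (op V)
        ((rhoHom k I (Set.Icc (a β) (b β)) isClosed_Icc (hsep β)).hom.app (op V) s)) e
    exact e'
  · rw [if_neg h]
    have e : Sigma.ι (fun α : A => intervalSheaf k (Set.Icc (a α) (b α))) β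
        ≫ projHom k a b α₀ = 0 := by
      unfold projHom
      rw [Sigma.ι_desc]
      simp [h]
    have e' := congrArg (fun (g : intervalSheaf k (Set.Icc (a β) (b β)) ⟶
        intervalSheaf k (Set.Icc (a α₀) (b α₀))) => g.hom.app (op V)
        ((rhoHom k I (Set.Icc (a β) (b β)) isClosed_Icc (hsep β)).hom.app (op V) s)) e
    exact e'


lemma phi_injective (hcov : ∀ x ∈ I, ∃ α, x ∈ Set.Icc (a α) (b α))
    (V : Opens (TopCat.of ℝ)) (s : (intervalSheaf k I).val.obj (op V))
    (hs : glueSec k I a b hsep hlf V s = 0) : s = 0 := by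
  classical
  apply Subtype.ext
  funext p
  show s.1 p = 0
  obtain ⟨α₀, hα₀⟩ := hcov p.1 p.2.2
  have hxV : p.1 ∈ V.1 := p.2.1
  have h0 : sfam k I a b hsep hlf V s ⟨p.1, hxV⟩ = 0 := by
    rw [← glueSec_spec k I a b hsep hlf V s ⟨p.1, hxV⟩, hs, map_zero]
  have h1 : (projHom k a b α₀).hom.app (op (coverU V ⟨p.1, hxV⟩))
      (sfam k I a b hsep hlf V s ⟨p.1, hxV⟩) = 0 := by
    rw [h0, map_zero]
  unfold sfam bigSum at h1
  rw [map_sum] at h1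
  rw [Finset.sum_congr rfl (fun β _ => proj_termAt k I a b hsep (coverU V ⟨p.1, hxV⟩) α₀ β
    ((intervalSheaf k I).val.map (homOfLE (coverU_le V ⟨p.1, hxV⟩)).op s))] at h1
  rw [Finset.sum_ite_eq' (SxF a b hlf p.1) α₀] at h1
  have hmem : α₀ ∈ SxF a b hlf p.1 :=
    mem_SxF a b hlf ⟨p.1, hα₀, ⟨by linarith [sub_one_lt p.1], by linarith [lt_add_one p.1]⟩⟩
  rw [if_pos hmem] at h1
  have h4 : rhoFun k I (Set.Icc (a α₀) (b α₀))
      (((intervalSheaf k I).val.map (homOfLE (coverU_le V ⟨p.1, hxV⟩)).op s).1)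
      ⟨p.1, ⟨⟨hxV, ⟨sub_one_lt p.1, lt_add_one p.1⟩⟩, hα₀⟩⟩ = 0 :=
    congrFun (congrArg Subtype.val h1) ⟨p.1, ⟨⟨hxV, ⟨sub_one_lt p.1, lt_add_one p.1⟩⟩, hα₀⟩⟩
  unfold rhoFun at h4
  rw [dif_pos (p.2.2 : p.1 ∈ I)] at h4
  exact h4

include hsep hlf in
open CategoryTheory.Limits in
lemma genericMono (hcov : ∀ x ∈ I, ∃ α, x ∈ Set.Icc (a α) (b α)) :
    ∃ φ : intervalSheaf k I ⟶ GG k a b, Mono φ := by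
  refine ⟨phiHom k I a b hsep hlf, ?_⟩
  haveI : ∀ Vop : (Opens (TopCat.of ℝ))ᵒᵖ, Mono ((phiHom k I a b hsep hlf).hom.app Vop) := by
    intro Vop
    rw [ModuleCat.mono_iff_injective]
    intro s t hst
    have hsub : glueSec k I a b hsep hlf Vop.unop (s - t) = 0 := by
      have : phiLM k I a b hsep hlf Vop.unop (s - t) = 0 := by
        rw [map_sub]
        exact sub_eq_zero.mpr hst
      exact this
    have := phi_injective k I a b hsep hlf hcov Vop.unop (s - t) hsub
    exact sub_eq_zero.mp this
  haveI : Mono (phiHom k I a b hsep hlf).hom := NatTrans.mono_of_mono_app _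
  exact (sheafToPresheaf _ _).mono_of_mono_map this

end CoprodAux

open CategoryTheory.Limits in
/-- For every nonempty interval `I ⊆ ℝ` there is a locally finite family of
compact intervals `[a_α, b_α]` and a monomorphism `k_I → ⊕_α k_{[a_α,b_α]}` in the category of
sheaves of `k`-vector spaces on `ℝ`. -/
theorem mono_into_coproduct_of_compacts (k : Type) [Field k]
    (I : Set ℝ) (hne : I.Nonempty) (hI : I.OrdConnected) :
    ∃ (A : Type) (a b : A → ℝ), (∀ α, a α ≤ b α) ∧
      (∀ K : Set ℝ, IsCompact K → {α | (Set.Icc (a α) (b α) ∩ K).Nonempty}.Finite) ∧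
      ∃ φ : intervalSheaf k I ⟶ (∐ fun α : A => intervalSheaf k (Set.Icc (a α) (b α))),
        Mono φ := by
  classical
  set S : ℤ → Set ℝ := fun n => closure I ∩ Set.Icc (n : ℝ) ((n : ℝ) + 1) with hSdef
  have hSclosed : ∀ n, IsClosed (S n) := fun n => isClosed_closure.inter isClosed_Icc
  have hSbddB : ∀ n, BddBelow (S n) := fun n => ⟨(n : ℝ), fun y hy => hy.2.1⟩
  have hSbddA : ∀ n, BddAbove (S n) := fun n => ⟨(n : ℝ) + 1, fun y hy => hy.2.2⟩
  set A := {n : ℤ // (S n).Nonempty} with hAdef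
  set a : A → ℝ := fun α => sInf (S α.1) with hadef
  set b : A → ℝ := fun α => sSup (S α.1) with hbdef
  have haS : ∀ α : A, a α ∈ S α.1 := fun α => (hSclosed α.1).csInf_mem α.2 (hSbddB α.1)
  have hbS : ∀ α : A, b α ∈ S α.1 := fun α => (hSclosed α.1).csSup_mem α.2 (hSbddA α.1)
  have hab : ∀ α : A, a α ≤ b α := fun α => csInf_le_csSup α.2 (hSbddB α.1) (hSbddA α.1)
  have hOC : (closure I).OrdConnected := (hI.isPreconnected.closure).ordConnected
  have hIccCl : ∀ α : A, Set.Icc (a α) (b α) ⊆ closure I := fun α =>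
    hOC.out (haS α).1 (hbS α).1
  have hIccIcc : ∀ α : A, Set.Icc (a α) (b α) ⊆ Set.Icc (α.1 : ℝ) ((α.1 : ℝ) + 1) :=
    fun α => Set.Icc_subset_Icc (haS α).2.1 (hbS α).2.2
  obtain ⟨x₀, hx₀⟩ := hne
  have key1 : ∀ y y', y ∈ closure I \ I → y' ∈ closure I → x₀ < y → y < y' → False := by
    intro y y' hy hy' hxy hyy'
    obtain ⟨w, hwI, hw⟩ := Metric.mem_closure_iff.mp hy' (y' - y) (by linarith)
    rw [Real.dist_eq] at hw
    obtain ⟨h1', h2'⟩ := abs_lt.mp hw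
    exact hy.2 (hI.out hx₀ hwI ⟨le_of_lt hxy, by linarith⟩)
  have key2 : ∀ y y', y ∈ closure I \ I → y' ∈ closure I → y < x₀ → y' < y → False := by
    intro y y' hy hy' hyx hyy'
    obtain ⟨w, hwI, hw⟩ := Metric.mem_closure_iff.mp hy' (y - y') (by linarith)
    rw [Real.dist_eq] at hw
    obtain ⟨h1', h2'⟩ := abs_lt.mp hw
    exact hy.2 (hI.out hwI hx₀ ⟨by linarith, le_of_lt hyx⟩)
  have hDfin : (closure I \ I).Finite := by
    have hsplit : closure I \ I ⊆
        (closure I \ I) ∩ Set.Iio x₀ ∪ (closure I \ I) ∩ Set.Ioi x₀ := by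
      intro y hy
      rcases lt_trichotomy y x₀ with h | h | h
      · exact Or.inl ⟨hy, h⟩
      · exact absurd hx₀ (h ▸ hy.2)
      · exact Or.inr ⟨hy, h⟩
    refine Set.Finite.subset (Set.Finite.union ?_ ?_) hsplit
    · apply Set.Subsingleton.finite
      intro y hy y' hy'
      by_contra hne'
      rcases lt_or_gt_of_ne hne' with h | h
      · exact key2 y' y hy'.1 hy.1.1 hy'.2 h
      · exact key2 y y' hy.1 hy'.1.1 hy.2 h
    · apply Set.Subsingleton.finite
      intro y hy y' hy'
      by_contra hne'
      rcases lt_or_gt_of_ne hne' with h | h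
      · exact key1 y y' hy.1 hy'.1.1 hy.2 h
      · exact key1 y' y hy'.1 hy.1.1 hy'.2 h
  have hsep : ∀ α : A, ∀ x ∈ I, x ∉ closure (Set.Icc (a α) (b α) \ I) := by
    intro α x hx hmem
    have hsub : Set.Icc (a α) (b α) \ I ⊆ closure I \ I := fun y hy =>
      ⟨hIccCl α hy.1, hy.2⟩
    have hxD : x ∈ closure I \ I := by
      have := closure_mono hsub hmem
      rwa [hDfin.isClosed.closure_eq] at this
    exact hxD.2 hx
  have hlf : ∀ K : Set ℝ, IsCompact K → {α : A | (Set.Icc (a α) (b α) ∩ K).Nonempty}.Finite := by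
    intro K hK
    obtain ⟨c, hc⟩ := hK.bddBelow
    obtain ⟨C, hC⟩ := hK.bddAbove
    have hsub : {α : A | (Set.Icc (a α) (b α) ∩ K).Nonempty}
        ⊆ Subtype.val ⁻¹' (Set.Icc ⌈c - 1⌉ ⌊C⌋) := by
      rintro α ⟨y, hyI, hyK⟩
      have h1 := (hIccIcc α hyI).1
      have h2 := (hIccIcc α hyI).2
      have h3 := hc hyK
      have h4 := hC hyK
      constructor
      · rw [Int.ceil_le]
        linarith
      · rw [Int.le_floor]
        linarith
    exact ((Set.finite_Icc _ _).preimage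
      (Set.injOn_of_injective Subtype.val_injective)).subset hsub
  have hcov : ∀ x ∈ I, ∃ α : A, x ∈ Set.Icc (a α) (b α) := by
    intro x hx
    have hxS : x ∈ S ⌊x⌋ := ⟨subset_closure hx, ⟨Int.floor_le x, (Int.lt_floor_add_one x).le⟩⟩
    exact ⟨⟨⌊x⌋, ⟨x, hxS⟩⟩, ⟨csInf_le (hSbddB _) hxS, le_csSup (hSbddA _) hxS⟩⟩
  exact ⟨A, a, b, hab, hlf, genericMono k I a b hsep hlf hcov⟩

end
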